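/- Let T be a weakly connected test digraph with edge coloring χ : E(T) → 𝒞 and deterministic labels X_e ∈ ⊗_{s∈𝒮_{χ(e)}} M_N(ℂ), let Λ_v (v ∈ V(T)) be deterministic diagonal matrices in M_{N^{#𝒮}}(ℂ), and let (Σ_c)_{c∈𝒞} be independent random permutation matrices with Σ_c uniformly distributed among the permutation matrices of size N^{#𝒮_c}. Let π = (π_s)_{s∈𝒮} be a family of partitions of V(T) with π_s ≥ ρ_s for every s ∈ 𝒮, and assume N^{#𝒮_c} ≥ #V(T_{π,c}) for every c ∈ 𝒞. Then 𝔼 γ_N(T,π) = N^{Σ_{s∈𝒮}(#π_s − 1)} · λ_N(T,π) · ∏_{c∈𝒞} [ ((N^{#𝒮_c} − #V(T_{π,c}))! / (N^{#𝒮_c})!) · N^{#𝒮_c · #Comp(T_{π,c})} · τ^∘_{N^{#𝒮_c}}(T_{π,c}) ]. -/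

import Mathlib

open Filter MeasureTheory Matrix
open scoped BigOperators Classical

namespace GraphPaper

/-! ### Directed multigraphs (test digraphs) -/

/-- A directed multigraph with vertex type `V` and edge type `E`. -/
structure Digr (V E : Type*) where
  src : E → V
  tgt : E → V

namespace Digr

variable {V E : Type*} (D : Digr V E)

/-- One-step (direction-agnostic) adjacency. -/
def Adj (v w : V) : Prop := ∃ e : E, D.src e = v ∧ D.tgt e = w

/-- The setoid of weakly connected components. -/
def compSetoid : Setoid V := Relation.EqvGen.setoid D.Adj

/-- The weakly connected components. -/
def Components : Type _ := Quotient D.compSetoid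

/-- The number of weakly connected components. -/
noncomputable def ncomp : ℕ := Nat.card D.Components

/-- Weak connectedness. -/
def IsConnected : Prop := Nonempty V ∧ ∀ v w : V, D.compSetoid v w

/-- The digraph with one edge removed. -/
def erase (e₀ : E) : Digr V {e : E // e ≠ e₀} :=
  ⟨fun e => D.src e.1, fun e => D.tgt e.1⟩

/-- `e₀` is a cut edge: removing it increases the number of weakly connected components. -/
def IsCutEdge (e₀ : E) : Prop := D.ncomp < (D.erase e₀).ncomp

/-- Two-edge-connectedness: weakly connected with no cut edge. -/
def IsTwoEdgeConnected : Prop := D.IsConnected ∧ ∀ e : E, ¬ D.IsCutEdge e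

/-- A tree (as an undirected multigraph): connected, with no cycles and no parallel
edges; equivalently, connected and every edge is a cut edge. -/
def IsTree : Prop := D.IsConnected ∧ ∀ e : E, D.IsCutEdge e

/-- Two vertices are related iff they are joined by a path containing no cut edges;
the classes are the two-edge-connected components. -/
def tecSetoid : Setoid V :=
  Relation.EqvGen.setoid (fun v w => ∃ e : E, ¬ D.IsCutEdge e ∧ D.src e = v ∧ D.tgt e = w)

/-- The degree of a two-edge-connected component in the forest `ℱ(D)`:
the number of cut edges incident to it. -/
noncomputable def tecDeg (b : Quotient D.tecSetoid) : ℕ :=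
  Nat.card {e : E // D.IsCutEdge e ∧
    (Quotient.mk D.tecSetoid (D.src e) = b ∨ Quotient.mk D.tecSetoid (D.tgt e) = b)}

/-- `𝔣(D)`: the total number of leaves of the forest `ℱ(D)` of two-edge-connected
components, an isolated vertex counting as two leaves. -/
noncomputable def leafCount : ℕ :=
  ∑ᶠ b : Quotient D.tecSetoid,
    (if D.tecDeg b = 0 then 2 else if D.tecDeg b = 1 then 1 else 0)

/-- The quotient digraph by a partition (setoid) of the vertices. -/
def quotient (s : Setoid V) : Digr (Quotient s) E :=
  ⟨fun e => Quotient.mk s (D.src e), fun e => Quotient.mk s (D.tgt e)⟩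

/-- The subgraph retaining only the edges satisfying `p` (all vertices kept). -/
def restrict (p : E → Prop) : Digr V {e : E // p e} :=
  ⟨fun e => D.src e.1, fun e => D.tgt e.1⟩

/-- The trace of a test digraph with labels `A`. -/
noncomputable def tdTrace {ι : Type*} (A : E → Matrix ι ι ℂ) : ℂ :=
  (1 / (Nat.card ι : ℂ) ^ D.ncomp) *
    ∑ᶠ i : V → ι, ∏ᶠ e : E, A e (i (D.tgt e)) (i (D.src e))

/-- The injective trace of a test digraph with labels `A`. -/
noncomputable def tdTraceInj {ι : Type*} (A : E → Matrix ι ι ℂ) : ℂ :=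
  (1 / (Nat.card ι : ℂ) ^ D.ncomp) *
    ∑ᶠ i : V → ι,
      if Function.Injective i then ∏ᶠ e : E, A e (i (D.tgt e)) (i (D.src e)) else 0

end Digr

/-! ### Colored digraphs, partitions, and the associated auxiliary graphs -/

section Colored

variable {V E S C : Type*}

/-- `ρ_s` : the partition of `V` into weakly connected components of the subgraph of `D`
retaining only edges whose color is not related to the string `s`. -/
def rhoSetoid (D : Digr V E) (χ : E → C) (rel : S → C → Prop) (s : S) : Setoid V :=
  Relation.EqvGen.setoid (fun v w => ∃ e : E, ¬ rel s (χ e) ∧ D.src e = v ∧ D.tgt e = w)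

/-- `ω_{π,c} = ⋀_{s ∈ 𝒮_c} π_s`, the common refinement. -/
def omegaSetoid (rel : S → C → Prop) (π : S → Setoid V) (c : C) : Setoid V :=
  ⨅ s : {s : S // rel s c}, π s.1

/-- `T_{π,c} = (T|_c)/ω_{π,c}`. -/
def Tpc (D : Digr V E) (χ : E → C) (rel : S → C → Prop) (π : S → Setoid V) (c : C) :
    Digr (Quotient (omegaSetoid rel π c)) {e : E // χ e = c} :=
  (D.restrict (fun e => χ e = c)).quotient (omegaSetoid rel π c)

/-- `𝒢_{π,s} = (T|_{𝒞_s})/π_s`. -/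
def Gps (D : Digr V E) (χ : E → C) (rel : S → C → Prop) (π : S → Setoid V) (s : S) :
    Digr (Quotient (π s)) {e : E // rel s (χ e)} :=
  (D.restrict (fun e => rel s (χ e))).quotient (π s)

/-- The map `h_{s,c} : V(T_{π,c}) → V(𝒢_{π,s})`, `[v]_{ω_{π,c}} ↦ [v]_{π_s}`. -/
def hmap (rel : S → C → Prop) (π : S → Setoid V) {s : S} {c : C} (h : rel s c) :
    Quotient (omegaSetoid rel π c) → Quotient (π s) :=
  fun q => Quotient.liftOn q (fun v => Quotient.mk (π s) v)
    (fun a b hab => Quot.sound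
      (Setoid.le_def.mp (iInf_le (fun s' : {s' : S // rel s' c} => π s'.1) ⟨s, h⟩) hab))

/-- The vertex set of the graph of colored components `GCC(T,π,s)`. -/
def GCCVert (D : Digr V E) (χ : E → C) (rel : S → C → Prop) (π : S → Setoid V) (s : S) :
    Type _ :=
  Quotient (π s) ⊕ (Σ c : {c : C // rel s c}, (Tpc D χ rel π c.1).Components)

/-- The edge set of `GCC(T,π,s)`. -/
def GCCEdge (rel : S → C → Prop) (π : S → Setoid V) (s : S) : Type _ :=
  Σ c : {c : C // rel s c}, Quotient (omegaSetoid rel π c.1)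

/-- The graph of colored components `GCC(T,π,s)`: the bipartite multigraph with an edge
for each `v ∈ V(T_{π,c})` (`c ∈ 𝒞_s`), joining the component of `T_{π,c}` containing `v`
to `h_{s,c}(v)`. -/
def GCC (D : Digr V E) (χ : E → C) (rel : S → C → Prop) (π : S → Setoid V) (s : S) :
    Digr (GCCVert D χ rel π s) (GCCEdge rel π s) where
  src := fun p => Sum.inr ⟨p.1, Quotient.mk (Tpc D χ rel π p.1.1).compSetoid p.2⟩
  tgt := fun p => Sum.inl (hmap rel π p.1.2 p.2)

end Colored

/-! ### The matrix model -/

section Model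

variable {S C : Type*}

/-- Index set for `⊗_{s ∈ 𝒮} M_N(ℂ)`. -/
abbrev BigIx (S : Type*) (N : ℕ) := S → Fin N

/-- Index set for `⊗_{s ∈ 𝒮_c} M_N(ℂ)`. -/
abbrev ColIx (rel : S → C → Prop) (c : C) (N : ℕ) := {s : S // rel s c} → Fin N

/-- View a matrix in `⊗_{s ∈ 𝒮_c} M_N(ℂ)` inside `⊗_{s ∈ 𝒮} M_N(ℂ)` by tensoring with
the identity on the remaining factors. -/
noncomputable def embed [Fintype S] (rel : S → C → Prop) (c : C) {N : ℕ}
    (X : Matrix (ColIx rel c N) (ColIx rel c N) ℂ) :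
    Matrix (BigIx S N) (BigIx S N) ℂ :=
  Matrix.of fun a b =>
    if (∀ s : S, ¬ rel s c → a s = b s) then X (fun s => a s.1) (fun s => b s.1) else 0

/-- The permutation matrix of a permutation. -/
def permMat {ι : Type*} [DecidableEq ι] (σ : Equiv.Perm ι) : Matrix ι ι ℂ :=
  Matrix.of fun i j => if σ j = i then 1 else 0

/-- `X̲ = Σ_c^* X Σ_c`, viewed inside `⊗_{s ∈ 𝒮} M_N(ℂ)`. -/
noncomputable def conjEmbed [Fintype S] (rel : S → C → Prop) (c : C) {N : ℕ}
    (σc : Equiv.Perm (ColIx rel c N))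
    (X : Matrix (ColIx rel c N) (ColIx rel c N) ℂ) :
    Matrix (BigIx S N) (BigIx S N) ℂ :=
  embed rel c ((permMat σc)ᴴ * X * permMat σc)

/-- `Δ`, the conditional expectation onto the diagonal. -/
def diagPart {ι : Type*} [DecidableEq ι] (M : Matrix ι ι ℂ) : Matrix ι ι ℂ :=
  Matrix.diagonal fun i => M i i

/-- The normalized `L²`-norm `‖M‖₂ = tr_n(M^*M)^{1/2}`. -/
noncomputable def l2norm {ι : Type*} [Fintype ι] (M : Matrix ι ι ℂ) : ℝ :=
  Real.sqrt ((Matrix.trace (Mᴴ * M) / (Fintype.card ι : ℂ)).re)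

/-- The operator norm of a matrix acting on Euclidean space. -/
noncomputable def opNorm {ι : Type*} [Fintype ι] [DecidableEq ι] (M : Matrix ι ι ℂ) : ℝ :=
  ‖Matrix.toEuclideanCLM (𝕜 := ℂ) M‖

/-- The ordered product `f 0 * f 1 * ⋯ * f (k-1)`. -/
def prodList {M : Type*} [Monoid M] (k : ℕ) (f : Fin k → M) : M :=
  ((List.finRange k).map f).prod

/-- `γ_N(T,π)`. -/
noncomputable def gammaN {V E : Type*} [Fintype S] (rel : S → C → Prop)
    (D : Digr V E) (χ : E → C) (N : ℕ)
    (X : (e : E) → Matrix (ColIx rel (χ e) N) (ColIx rel (χ e) N) ℂ)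
    (Λ : V → Matrix (BigIx S N) (BigIx S N) ℂ)
    (π : S → Setoid V)
    (σ : (c : C) → Equiv.Perm (ColIx rel c N)) : ℂ :=
  (1 / (N : ℂ) ^ (Nat.card S)) *
    ∑ᶠ i : V → BigIx S N,
      if (∀ s : S, Setoid.ker (fun v => i v s) = π s) then
        (∏ᶠ v : V, Λ v (i v) (i v)) *
          ∏ᶠ e : E, (conjEmbed rel (χ e) (σ (χ e)) (X e)) (i (D.tgt e)) (i (D.src e))
      else 0

/-- `λ_N(T,π)`. -/
noncomputable def lambdaN {V : Type*} [Fintype S] (N : ℕ)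
    (Λ : V → Matrix (BigIx S N) (BigIx S N) ℂ) (π : S → Setoid V) : ℂ :=
  (1 / (N : ℂ) ^ (∑ᶠ s : S, Nat.card (Quotient (π s)))) *
    ∑ᶠ i : V → BigIx S N,
      if (∀ s : S, Setoid.ker (fun v => i v s) = π s) then (∏ᶠ v : V, Λ v (i v) (i v))
      else 0

/-- `τ_{N^{#𝒮}}(T̊)`, the trace of the test digraph `T` with a `Λ_v`-labelled self-loop
added at each vertex `v`. -/
noncomputable def ringTrace {V E : Type*} [Fintype S] (rel : S → C → Prop)
    (D : Digr V E) (χ : E → C) (N : ℕ)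
    (X : (e : E) → Matrix (ColIx rel (χ e) N) (ColIx rel (χ e) N) ℂ)
    (Λ : V → Matrix (BigIx S N) (BigIx S N) ℂ)
    (σ : (c : C) → Equiv.Perm (ColIx rel c N)) : ℂ :=
  (1 / (N : ℂ) ^ (Nat.card S)) *
    ∑ᶠ i : V → BigIx S N,
      (∏ᶠ v : V, Λ v (i v) (i v)) *
        ∏ᶠ e : E, (conjEmbed rel (χ e) (σ (χ e)) (X e)) (i (D.tgt e)) (i (D.src e))

/-- Expectation with respect to independent uniformly random permutations, one for each
color: the average over all tuples of permutations. -/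
noncomputable def Eperm [Fintype S] (rel : S → C → Prop) (N : ℕ)
    (f : ((c : C) → Equiv.Perm (ColIx rel c N)) → ℂ) : ℂ :=
  (∑ᶠ σ : (c : C) → Equiv.Perm (ColIx rel c N), f σ) /
    (Nat.card ((c : C) → Equiv.Perm (ColIx rel c N)) : ℂ)

/-- Transport a matrix label along an equality of colors. -/
def castCol (rel : S → C → Prop) {N : ℕ} {c c' : C} (h : c = c')
    (X : Matrix (ColIx rel c N) (ColIx rel c N) ℂ) :
    Matrix (ColIx rel c' N) (ColIx rel c' N) ℂ := h ▸ X

/-- The uniform probability measure on the tuples of permutations (with the discrete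
`σ`-algebra). -/
noncomputable def uniformTupleMeasure [Fintype C] [Fintype S] (rel : S → C → Prop) (N : ℕ) :=
  letI : MeasurableSpace ((c : C) → Equiv.Perm (ColIx rel c N)) := ⊤
  haveI : Nonempty ((c : C) → Equiv.Perm (ColIx rel c N)) := ⟨fun _ => 1⟩
  ((PMF.uniformOfFintype ((c : C) → Equiv.Perm (ColIx rel c N))).toMeasure :
    Measure ((c : C) → Equiv.Perm (ColIx rel c N)))

/-- The tuple `(Σ_c)_{c ∈ 𝒞}` of random permutations is uniformly distributed on the
product (equivalently, the `Σ_c` are independent and each uniform). -/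
def hasUniformLaw [Fintype C] [Fintype S] (rel : S → C → Prop) {Ω : Type*}
    [MeasurableSpace Ω] (P : Measure Ω) (N : ℕ)
    (Sp : (c : C) → Ω → Equiv.Perm (ColIx rel c N)) : Prop :=
  letI : MeasurableSpace ((c : C) → Equiv.Perm (ColIx rel c N)) := ⊤
  Measure.map (fun ω c => Sp c ω) P = uniformTupleMeasure rel N

end Model

/-- A word `χ : [k] → 𝒞` is `𝒢`-reduced. -/
def GReduced {C : Type*} (Edg : C → C → Prop) {k : ℕ} (χ : Fin k → C) : Prop :=
  ∀ i j : Fin k, i < j → χ i = χ j → ∃ l : Fin k, i < l ∧ l < j ∧ ¬ Edg (χ i) (χ l)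

/-! ### Sofic groups and graph products of groups -/

/-- The normalized Hamming distance on `S_N`. -/
noncomputable def dHamm {n : ℕ} (σ τ : Equiv.Perm (Fin n)) : ℝ :=
  ((Finset.univ.filter fun j : Fin n => σ j ≠ τ j).card : ℝ) / n

/-- A group is sofic if it admits an asymptotic homomorphism into permutation groups. -/
def IsSofic (Γ : Type*) [Group Γ] : Prop :=
  ∃ (Nk : ℕ → ℕ) (σ : (k : ℕ) → Γ → Equiv.Perm (Fin (Nk k))),
    Tendsto Nk atTop atTop ∧
    (∀ g h : Γ, Tendsto (fun k => dHamm (σ k g * σ k h) (σ k (g * h))) atTop (nhds 0)) ∧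
    (∀ g : Γ, Tendsto (fun k => dHamm (σ k g) 1) atTop
      (nhds (if g = 1 then 0 else 1)))

/-- The normal subgroup of the free product generated by the commutators of elements of
vertex groups joined by an edge. -/
def graphProductKer {C : Type*} (Edg : C → C → Prop) (G : C → Type*)
    [∀ c, Group (G c)] : Subgroup (Monoid.CoprodI G) :=
  Subgroup.normalClosure
    {x | ∃ (c c' : C) (_ : Edg c c') (g : G c) (g' : G c'),
      x = Monoid.CoprodI.of g * Monoid.CoprodI.of g' *
        (Monoid.CoprodI.of g)⁻¹ * (Monoid.CoprodI.of g')⁻¹}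

/-- The graph product of the groups `(G c)_{c ∈ 𝒞}` over the graph with edge relation
`Edg`. -/
def GraphProduct {C : Type*} (Edg : C → C → Prop) (G : C → Type*) [∀ c, Group (G c)] :
    Type _ :=
  Monoid.CoprodI G ⧸ graphProductKer Edg G

instance graphProductKer_normal {C : Type*} (Edg : C → C → Prop) (G : C → Type*)
    [∀ c, Group (G c)] : (graphProductKer Edg G).Normal :=
  Subgroup.normalClosure_normal

instance {C : Type*} (Edg : C → C → Prop) (G : C → Type*) [∀ c, Group (G c)] :
    Group (GraphProduct Edg G) :=
  QuotientGroup.Quotient.group _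

/-- The group element corresponding to a word in the generators and their inverses:
the letter `(j, tt)` is `g_j`, and `(j, ff)` is `g_j⁻¹`. -/
def wordElemG {Γ : Type*} [Group Γ] (g : ℕ → Γ) {m : ℕ} (w : Fin m → ℕ × Bool) : Γ :=
  prodList m (fun i => if (w i).2 then g (w i).1 else (g (w i).1)⁻¹)

/-- The matrix product corresponding to a word in permutation matrices and their
inverses. -/
noncomputable def wordMat {N m : ℕ} (T : ℕ → Equiv.Perm (Fin N)) (w : Fin m → ℕ × Bool) :
    Matrix (Fin N) (Fin N) ℂ :=
  prodList m (fun i => if (w i).2 then permMat (T (w i).1) else (permMat (T (w i).1))⁻¹)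


/-! ### Auxiliary lemmas for the proof of `statement7` -/

section PermCount
open Finset
variable {α ι : Type*}

lemma exists_perm_comp [Finite ι] {j k : α → ι}
    (hj : Function.Injective j) (hk : Function.Injective k) :
    ∃ τ : Equiv.Perm ι, ∀ a, τ (j a) = k a := by
  classical
  refine ⟨Equiv.extendSubtype
    ((Equiv.ofInjective j hj).symm.trans (Equiv.ofInjective k hk)), fun a => ?_⟩
  have h1 : j a ∈ Set.range j := ⟨a, rfl⟩
  rw [Equiv.extendSubtype_apply_of_mem _ (j a) h1]
  have h2 : (⟨j a, h1⟩ : Set.range j) = Equiv.ofInjective j hj a := rfl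
  rw [h2, Equiv.trans_apply, Equiv.symm_apply_apply, Equiv.ofInjective_apply]

lemma card_fixing [Fintype α] [Fintype ι] {j : α → ι} (hj : Function.Injective j) :
    Nat.card {σ : Equiv.Perm ι // ∀ a, σ (j a) = j a}
      = (Fintype.card ι - Fintype.card α).factorial := by
  classical
  have e1 : {σ : Equiv.Perm ι // ∀ a, σ (j a) = j a}
      ≃ {f : Equiv.Perm ι // ∀ x, ¬ (x ∉ Set.range j) → f x = x} := by
    refine Equiv.subtypeEquiv (Equiv.refl _) fun σ => ⟨fun h x hx => ?_, fun h a => ?_⟩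
    · obtain ⟨a, rfl⟩ := not_not.mp hx
      exact h a
    · exact h (j a) (not_not.mpr ⟨a, rfl⟩)
  rw [Nat.card_congr (e1.trans (Equiv.Perm.subtypeEquivSubtypePerm
    (fun x => x ∉ Set.range j)).symm), Nat.card_eq_fintype_card, Fintype.card_perm,
    Fintype.card_subtype_compl, Fintype.card_congr (Equiv.ofInjective j hj).symm]

lemma card_fiber [Fintype α] [Fintype ι] {j k : α → ι}
    (hj : Function.Injective j) (hk : Function.Injective k) :
    Nat.card {σ : Equiv.Perm ι // ∀ a, σ (j a) = k a}
      = (Fintype.card ι - Fintype.card α).factorial := by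
  classical
  obtain ⟨τ, hτ⟩ := exists_perm_comp hj hk
  have e : {σ : Equiv.Perm ι // ∀ a, σ (j a) = k a}
      ≃ {σ : Equiv.Perm ι // ∀ a, σ (j a) = j a} := by
    refine Equiv.subtypeEquiv (Equiv.mulLeft τ⁻¹) fun σ => ?_
    constructor
    · intro h a; simp [Equiv.Perm.mul_apply, h a, ← hτ a]
    · intro h a
      have h2 := h a
      simp only [Equiv.coe_mulLeft, Equiv.Perm.mul_apply] at h2
      have h3 := congrArg τ h2
      simpa [hτ a] using h3
  rw [Nat.card_congr e, card_fixing hj]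

lemma sum_perm_comp [Fintype α] [Fintype ι] [DecidableEq α] [DecidableEq ι] {j : α → ι} (hj : Function.Injective j)
    (f : (α → ι) → ℂ) :
    ∑ σ : Equiv.Perm ι, f (fun a => σ (j a))
      = ((Fintype.card ι - Fintype.card α).factorial : ℂ) *
        ∑ k : α → ι, if Function.Injective k then f k else 0 := by
  rw [← Finset.sum_fiberwise Finset.univ (fun σ : Equiv.Perm ι => (fun a => σ (j a)))
    (fun σ => f (fun a => σ (j a))), Finset.mul_sum]
  refine Finset.sum_congr rfl fun k _ => ?_
  by_cases hk : Function.Injective k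
  · rw [if_pos hk]
    have hcard : (Finset.univ.filter
        (fun σ : Equiv.Perm ι => (fun a => σ (j a)) = k)).card
        = (Fintype.card ι - Fintype.card α).factorial := by
      rw [← Fintype.card_subtype, ← Nat.card_eq_fintype_card]
      have hcongr : Nat.card {σ : Equiv.Perm ι // (fun a => σ (j a)) = k}
          = Nat.card {σ : Equiv.Perm ι // ∀ a, σ (j a) = k a} :=
        Nat.card_congr (Equiv.subtypeEquiv (Equiv.refl _) fun σ => by simp [funext_iff])
      rw [hcongr, card_fiber hj hk]
    calc ∑ σ ∈ Finset.univ.filter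
          (fun σ : Equiv.Perm ι => (fun a => σ (j a)) = k), f (fun a => σ (j a))
        = ∑ σ ∈ Finset.univ.filter
          (fun σ : Equiv.Perm ι => (fun a => σ (j a)) = k), f k := by
          refine Finset.sum_congr rfl fun σ hσ => ?_
          rw [(Finset.mem_filter.mp hσ).2]
      _ = _ := by rw [Finset.sum_const, hcard]; simp [mul_comm]
  · rw [if_neg hk, mul_zero]
    refine Finset.sum_eq_zero fun σ hσ => ?_
    exact absurd ((Finset.mem_filter.mp hσ).2 ▸ (σ.injective.comp hj)) hk

lemma sum_perm_prod {W F ι : Type*} [Fintype W] [Fintype F] [Fintype ι]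
    [DecidableEq W] [DecidableEq ι]
    (Q : Digr W F) (A : F → Matrix ι ι ℂ) {j : W → ι} (hj : Function.Injective j) :
    ∑ σ : Equiv.Perm ι, ∏ e : F, A e (σ (j (Q.tgt e))) (σ (j (Q.src e)))
      = ((Fintype.card ι - Fintype.card W).factorial : ℂ) *
        ∑ k : W → ι, if Function.Injective k then
          ∏ e : F, A e (k (Q.tgt e)) (k (Q.src e)) else 0 :=
  sum_perm_comp hj fun k => ∏ e : F, A e (k (Q.tgt e)) (k (Q.src e))

end PermCount

section AuxTrace

lemma tdTraceInj_eq {W F ι : Type*} [Fintype W] [Fintype F] [Fintype ι]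
    [DecidableEq W] [DecidableEq ι]
    (Q : Digr W F) (A : F → Matrix ι ι ℂ) :
    Q.tdTraceInj A = (1 / (Nat.card ι : ℂ) ^ Q.ncomp) *
      ∑ k : W → ι, if Function.Injective k then
        ∏ e : F, A e (k (Q.tgt e)) (k (Q.src e)) else 0 := by
  rw [Digr.tdTraceInj, finsum_eq_sum_of_fintype]
  congr 1
  refine Finset.sum_congr rfl fun k _ => ?_
  by_cases hk : Function.Injective k <;> simp [hk, finprod_eq_prod_of_fintype]

lemma omega_iff {V S C : Type*} {rel : S → C → Prop} {π : S → Setoid V} {c : C} {v w : V} :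
    omegaSetoid rel π c v w ↔ ∀ s : {s : S // rel s c}, π s.1 v w := by
  constructor
  · intro h s
    exact Setoid.le_def.mp (iInf_le (fun s : {s : S // rel s c} => π s.1) s) h
  · intro h
    have he : omegaSetoid rel π c
        = sInf (Set.range fun s : {s : S // rel s c} => π s.1) := rfl
    rw [he, Setoid.sInf_iff]
    rintro t ⟨s, rfl⟩
    exact h s

lemma permMat_conj {ι : Type*} [Fintype ι] [DecidableEq ι] (σ : Equiv.Perm ι)
    (X : Matrix ι ι ℂ) (a b : ι) :
    ((permMat σ)ᴴ * X * permMat σ) a b = X (σ a) (σ b) := by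
  simp [Matrix.mul_apply, permMat, Matrix.conjTranspose_apply, Finset.sum_ite_eq,
    Finset.sum_ite_eq', apply_ite, ite_mul, mul_ite]

lemma conjEmbed_apply {S C : Type*} [Fintype S] (rel : S → C → Prop) (c : C) {N : ℕ}
    (σc : Equiv.Perm (ColIx rel c N))
    (X : Matrix (ColIx rel c N) (ColIx rel c N) ℂ) (a b : BigIx S N)
    (h : ∀ s : S, ¬ rel s c → a s = b s) :
    conjEmbed rel c σc X a b
      = X (σc (fun s => a s.1)) (σc (fun s => b s.1)) := by
  rw [conjEmbed, embed]
  simp only [Matrix.of_apply, if_pos h]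
  exact permMat_conj σc X _ _

lemma term_cast {S C : Type*} [Fintype S] (rel : S → C → Prop) {N : ℕ}
    {c c' : C} (h : c = c')
    (X : Matrix (ColIx rel c N) (ColIx rel c N) ℂ)
    (σ : (c : C) → Equiv.Perm (ColIx rel c N)) (a b : BigIx S N) :
    X (σ c (fun s => a s.1)) (σ c (fun s => b s.1))
      = (castCol rel h X) (σ c' (fun s => a s.1)) (σ c' (fun s => b s.1)) := by
  subst h; rfl


lemma sum_average {Ω I : Type*} [Fintype Ω] [Fintype I] (p : I → Prop) [DecidablePred p]
    (L : I → ℂ) (P : I → Ω → ℂ) (PP a : ℂ)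
    (hP : ∀ i, p i → ∑ ω : Ω, P i ω = PP) :
    (∑ ω : Ω, a * ∑ i : I, if p i then L i * P i ω else 0)
      = a * ((∑ i : I, if p i then L i else 0) * PP) := by
  rw [← Finset.mul_sum]
  congr 1
  rw [Finset.sum_comm, Finset.sum_mul]
  refine Finset.sum_congr rfl fun i _ => ?_
  by_cases hi : p i
  · simp only [if_pos hi]
    rw [← Finset.mul_sum, hP i hi]
  · simp [hi]

end AuxTrace

set_option maxHeartbeats 1000000 in
/-- **Proposition (exact evaluation of `𝔼 γ_N(T,π)`).** -/
theorem statement7 {C S V E : Type} [Fintype C] [Fintype S] [Fintype V] [Fintype E]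
    (rel : S → C → Prop) (hne : ∀ c : C, ∃ s : S, rel s c)
    (D : Digr V E) (hconn : D.IsConnected) (χ : E → C) (N : ℕ)
    (X : (e : E) → Matrix (ColIx rel (χ e) N) (ColIx rel (χ e) N) ℂ)
    (Λ : V → Matrix (BigIx S N) (BigIx S N) ℂ) (hΛ : ∀ v, (Λ v).IsDiag)
    (π : S → Setoid V) (hρ : ∀ s : S, rhoSetoid D χ rel s ≤ π s)
    (hbig : ∀ c : C, Nat.card (Quotient (omegaSetoid rel π c))
      ≤ N ^ (Nat.card {s : S // rel s c})) :
    Eperm rel N (gammaN rel D χ N X Λ π)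
      = (N : ℂ) ^ (∑ᶠ s : S, (Nat.card (Quotient (π s)) - 1)) * lambdaN N Λ π *
        ∏ᶠ c : C,
          ((((N ^ Nat.card {s : S // rel s c} -
                Nat.card (Quotient (omegaSetoid rel π c))).factorial : ℂ) /
              ((N ^ Nat.card {s : S // rel s c}).factorial : ℂ))
            * (N : ℂ) ^ (Nat.card {s : S // rel s c} * (Tpc D χ rel π c).ncomp)
            * (Tpc D χ rel π c).tdTraceInj (fun e => castCol rel e.2 (X e.1))) := by
  obtain ⟨hVne, -⟩ := hconn
  have hcardCol : ∀ c : C, Fintype.card (ColIx rel c N) = N ^ Nat.card {s : S // rel s c} := by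
    intro c
    rw [Fintype.card_fun, Fintype.card_fin, Nat.card_eq_fintype_card]
  have hmpos : ∀ c : C, 0 < Nat.card (Quotient (omegaSetoid rel π c)) := by
    intro c
    have : Nonempty (Quotient (omegaSetoid rel π c)) := ⟨Quotient.mk _ hVne.some⟩
    exact Nat.card_pos
  have hnne : ∀ c : C, N ^ Nat.card {s : S // rel s c} ≠ 0 :=
    fun c => (lt_of_lt_of_le (hmpos c) (hbig c)).ne'
  have hquotpos : ∀ s : S, 0 < Nat.card (Quotient (π s)) := by
    intro s
    have : Nonempty (Quotient (π s)) := ⟨Quotient.mk _ hVne.some⟩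
    exact Nat.card_pos
  have hker : ∀ (i : V → BigIx S N), (∀ s : S, Setoid.ker (fun v => i v s) = π s) →
      ∀ (s : S) (v w : V), (π s) v w ↔ i v s = i w s := by
    intro i hi s v w
    rw [← hi s]
    exact Setoid.ker_def
  have homega : ∀ (i : V → BigIx S N), (∀ s : S, Setoid.ker (fun v => i v s) = π s) →
      ∀ (c : C) (v w : V), (omegaSetoid rel π c) v w ↔
        (fun s : {s : S // rel s c} => i v s.1) = (fun s : {s : S // rel s c} => i w s.1) := by
    intro i hi c v w
    rw [omega_iff, funext_iff]
    exact forall_congr' fun s => hker i hi s.1 v w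
  have hrho : ∀ (i : V → BigIx S N), (∀ s : S, Setoid.ker (fun v => i v s) = π s) →
      ∀ (e : E) (s : S), ¬ rel s (χ e) → i (D.tgt e) s = i (D.src e) s := by
    intro i hi e s hs
    have h1 : rhoSetoid D χ rel s (D.src e) (D.tgt e) :=
      Relation.EqvGen.rel _ _ ⟨e, hs, rfl, rfl⟩
    have h2 : (π s) (D.src e) (D.tgt e) := Setoid.le_def.mp (hρ s) h1
    exact ((hker i hi s _ _).mp h2).symm
  have keyA : ∀ (i : V → BigIx S N), (∀ s : S, Setoid.ker (fun v => i v s) = π s) →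
      ∀ σ : (c : C) → Equiv.Perm (ColIx rel c N),
      (∏ᶠ e : E, conjEmbed rel (χ e) (σ (χ e)) (X e) (i (D.tgt e)) (i (D.src e)))
        = ∏ c : C, ∏ e : {e : E // χ e = c}, (castCol rel e.2 (X e.1)) (σ c (fun s => i (D.tgt e.1) s.1)) (σ c (fun s => i (D.src e.1) s.1)) := by
    intro i hi σ
    rw [finprod_eq_prod_of_fintype,
      ← Finset.prod_fiberwise Finset.univ χ
        (fun e => conjEmbed rel (χ e) (σ (χ e)) (X e) (i (D.tgt e)) (i (D.src e)))]
    refine Finset.prod_congr rfl fun c _ => ?_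
    rw [Finset.prod_subtype (p := fun e => χ e = c) (Finset.univ.filter (fun e => χ e = c))
      (fun e => by simp)
      (fun e => conjEmbed rel (χ e) (σ (χ e)) (X e) (i (D.tgt e)) (i (D.src e)))]
    refine Finset.prod_congr rfl fun e _ => ?_
    exact (conjEmbed_apply rel (χ e.1) (σ (χ e.1)) (X e.1) (i (D.tgt e.1)) (i (D.src e.1))
      (fun s hs => hrho i hi e.1 s hs)).trans (term_cast rel e.2 (X e.1) σ _ _)
  have keyB : ∀ (i : V → BigIx S N), (∀ s : S, Setoid.ker (fun v => i v s) = π s) →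
      ∀ c : C,
      (∑ τ : Equiv.Perm (ColIx rel c N), ∏ e : {e : E // χ e = c}, (castCol rel e.2 (X e.1)) (τ (fun s => i (D.tgt e.1) s.1)) (τ (fun s => i (D.src e.1) s.1)))
        = (((N ^ Nat.card {s : S // rel s c} - Nat.card (Quotient (omegaSetoid rel π c))).factorial : ℂ)) * (∑ k : Quotient (omegaSetoid rel π c) → ColIx rel c N, if Function.Injective k then ∏ e : {e : E // χ e = c}, (castCol rel e.2 (X e.1)) (k ((Tpc D χ rel π c).tgt e)) (k ((Tpc D χ rel π c).src e)) else 0) := by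
    intro i hi c
    have hjinj : Function.Injective
        (Quotient.lift (fun v => (fun s : {s : S // rel s c} => i v s.1))
          (fun v w h => (homega i hi c v w).mp h)
          : Quotient (omegaSetoid rel π c) → ColIx rel c N) :=
      fun q q' => Quotient.inductionOn₂ q q'
        (fun v w h => Quotient.sound ((homega i hi c v w).mpr h))
    have hres := sum_perm_prod (Tpc D χ rel π c)
      (fun e : {e : E // χ e = c} => castCol rel e.2 (X e.1)) hjinj
    rw [hcardCol c, ← Nat.card_eq_fintype_card] at hres
    simp only [Tpc, Digr.quotient, Digr.restrict, Quotient.lift_mk] at hres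
    convert hres using 2
    rfl
  have keyD : ∀ (i : V → BigIx S N), (∀ s : S, Setoid.ker (fun v => i v s) = π s) →
      (∑ σ : (c : C) → Equiv.Perm (ColIx rel c N), ∏ᶠ e : E, conjEmbed rel (χ e) (σ (χ e)) (X e) (i (D.tgt e)) (i (D.src e))) = (∏ c : C, ((((N ^ Nat.card {s : S // rel s c} - Nat.card (Quotient (omegaSetoid rel π c))).factorial : ℂ)) * (∑ k : Quotient (omegaSetoid rel π c) → ColIx rel c N, if Function.Injective k then ∏ e : {e : E // χ e = c}, (castCol rel e.2 (X e.1)) (k ((Tpc D χ rel π c).tgt e)) (k ((Tpc D χ rel π c).src e)) else 0))) := by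
    intro i hi
    calc (∑ σ : (c : C) → Equiv.Perm (ColIx rel c N), ∏ᶠ e : E, conjEmbed rel (χ e) (σ (χ e)) (X e) (i (D.tgt e)) (i (D.src e)))
        = ∑ σ : (c : C) → Equiv.Perm (ColIx rel c N),
            ∏ c : C, ∏ e : {e : E // χ e = c}, (castCol rel e.2 (X e.1)) (σ c (fun s => i (D.tgt e.1) s.1)) (σ c (fun s => i (D.src e.1) s.1)) :=
          Finset.sum_congr rfl fun σ _ => keyA i hi σ
      _ = ∏ c : C, ∑ τ : Equiv.Perm (ColIx rel c N), ∏ e : {e : E // χ e = c}, (castCol rel e.2 (X e.1)) (τ (fun s => i (D.tgt e.1) s.1)) (τ (fun s => i (D.src e.1) s.1)) :=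
          (Fintype.prod_sum fun c (τ : Equiv.Perm (ColIx rel c N)) =>
            ∏ e : {e : E // χ e = c}, (castCol rel e.2 (X e.1)) (τ (fun s => i (D.tgt e.1) s.1)) (τ (fun s => i (D.src e.1) s.1))).symm
      _ = (∏ c : C, ((((N ^ Nat.card {s : S // rel s c} - Nat.card (Quotient (omegaSetoid rel π c))).factorial : ℂ)) * (∑ k : Quotient (omegaSetoid rel π c) → ColIx rel c N, if Function.Injective k then ∏ e : {e : E // χ e = c}, (castCol rel e.2 (X e.1)) (k ((Tpc D χ rel π c).tgt e)) (k ((Tpc D χ rel π c).src e)) else 0))) := Finset.prod_congr rfl fun c _ => keyB i hi c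
  have hK : (Nat.card ((c : C) → Equiv.Perm (ColIx rel c N)) : ℂ)
      = ∏ c : C, (((N ^ Nat.card {s : S // rel s c}).factorial : ℂ)) := by
    rw [Nat.card_eq_fintype_card, Fintype.card_pi, Nat.cast_prod]
    exact Finset.prod_congr rfl fun c _ => by rw [Fintype.card_perm, hcardCol c]
  have hscal : (1 / (N : ℂ) ^ (Nat.card S))
      = (N : ℂ) ^ (∑ s : S, (Nat.card (Quotient (π s)) - 1)) *
        (1 / (N : ℂ) ^ (∑ s : S, Nat.card (Quotient (π s)))) := by
    by_cases hN : N = 0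
    · subst hN
      rcases isEmpty_or_nonempty S with hS | hS
      · simp [Nat.card_eq_fintype_card]
      · have h1 : Nat.card S ≠ 0 := Nat.card_pos.ne'
        have h2 : (∑ s : S, Nat.card (Quotient (π s))) ≠ 0 := by
          obtain ⟨s⟩ := hS
          exact (Finset.sum_pos (fun s _ => hquotpos s) ⟨s, Finset.mem_univ s⟩).ne'
        rw [Nat.cast_zero, zero_pow h1, zero_pow h2]
        simp
    · have hB : (∑ s : S, Nat.card (Quotient (π s)))
          = (∑ s : S, (Nat.card (Quotient (π s)) - 1)) + Nat.card S := by
        rw [Nat.card_eq_fintype_card, ← Finset.card_univ, Finset.card_eq_sum_ones,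
          ← Finset.sum_add_distrib]
        exact Finset.sum_congr rfl fun s _ => (Nat.sub_add_cancel (hquotpos s)).symm
      have hN' : (N : ℂ) ≠ 0 := Nat.cast_ne_zero.mpr hN
      rw [hB, pow_add]
      field_simp
  have hL : Eperm rel N (gammaN rel D χ N X Λ π) = (((1 / (N : ℂ) ^ (Nat.card S)) * ((∑ i : V → BigIx S N, if (∀ s : S, Setoid.ker (fun v => i v s) = π s) then (∏ᶠ v : V, Λ v (i v) (i v)) else 0) * (∏ c : C, ((((N ^ Nat.card {s : S // rel s c} - Nat.card (Quotient (omegaSetoid rel π c))).factorial : ℂ)) * (∑ k : Quotient (omegaSetoid rel π c) → ColIx rel c N, if Function.Injective k then ∏ e : {e : E // χ e = c}, (castCol rel e.2 (X e.1)) (k ((Tpc D χ rel π c).tgt e)) (k ((Tpc D χ rel π c).src e)) else 0))))) / (∏ c : C, (((N ^ Nat.card {s : S // rel s c}).factorial : ℂ)))) := by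
    have hnum : (∑ σ : (c : C) → Equiv.Perm (ColIx rel c N),
          (1 / (N : ℂ) ^ (Nat.card S)) * ∑ i : V → BigIx S N,
            if (∀ s : S, Setoid.ker (fun v => i v s) = π s) then (∏ᶠ v : V, Λ v (i v) (i v)) * ∏ᶠ e : E, conjEmbed rel (χ e) (σ (χ e)) (X e) (i (D.tgt e)) (i (D.src e)) else 0)
        = (1 / (N : ℂ) ^ (Nat.card S)) * ((∑ i : V → BigIx S N, if (∀ s : S, Setoid.ker (fun v => i v s) = π s) then (∏ᶠ v : V, Λ v (i v) (i v)) else 0) * (∏ c : C, ((((N ^ Nat.card {s : S // rel s c} - Nat.card (Quotient (omegaSetoid rel π c))).factorial : ℂ)) * (∑ k : Quotient (omegaSetoid rel π c) → ColIx rel c N, if Function.Injective k then ∏ e : {e : E // χ e = c}, (castCol rel e.2 (X e.1)) (k ((Tpc D χ rel π c).tgt e)) (k ((Tpc D χ rel π c).src e)) else 0)))) :=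
      sum_average _ _ _ _ _ keyD
    simp only [Eperm, gammaN, finsum_eq_sum_of_fintype]
    rw [hK, hnum]
  have hfac : ∀ c : C, (((((N ^ Nat.card {s : S // rel s c} - Nat.card (Quotient (omegaSetoid rel π c))).factorial : ℂ)) / (((N ^ Nat.card {s : S // rel s c}).factorial : ℂ))) * (N : ℂ) ^ (Nat.card {s : S // rel s c} * (Tpc D χ rel π c).ncomp) * (Tpc D χ rel π c).tdTraceInj (fun e => castCol rel e.2 (X e.1))) = ((((N ^ Nat.card {s : S // rel s c} - Nat.card (Quotient (omegaSetoid rel π c))).factorial : ℂ)) * (∑ k : Quotient (omegaSetoid rel π c) → ColIx rel c N, if Function.Injective k then ∏ e : {e : E // χ e = c}, (castCol rel e.2 (X e.1)) (k ((Tpc D χ rel π c).tgt e)) (k ((Tpc D χ rel π c).src e)) else 0)) / (((N ^ Nat.card {s : S // rel s c}).factorial : ℂ)) := by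
    intro c
    rw [tdTraceInj_eq]
    have h1 : (Nat.card (ColIx rel c N) : ℂ) = ((N ^ Nat.card {s : S // rel s c} : ℕ) : ℂ) := by
      rw [Nat.card_eq_fintype_card, hcardCol c]
    have h2 : (N : ℂ) ^ (Nat.card {s : S // rel s c} * (Tpc D χ rel π c).ncomp)
        = ((N ^ Nat.card {s : S // rel s c} : ℕ) : ℂ) ^ (Tpc D χ rel π c).ncomp := by
      rw [pow_mul]
      norm_cast
    have h3 : ((N ^ Nat.card {s : S // rel s c} : ℕ) : ℂ) ^ (Tpc D χ rel π c).ncomp ≠ 0 :=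
      pow_ne_zero _ (Nat.cast_ne_zero.mpr (hnne c))
    rw [h1, h2]
    have key : ∀ (A G Sm Xp : ℂ), Xp ≠ 0 → A / G * Xp * (1 / Xp * Sm) = A * Sm / G := by
      intro A G Sm Xp hX
      have h4 : Xp * Xp⁻¹ = 1 := mul_inv_cancel₀ hX
      calc A / G * Xp * (1 / Xp * Sm) = A * Sm / G * (Xp * Xp⁻¹) := by ring
        _ = A * Sm / G := by rw [h4, mul_one]
    exact key _ _ _ _ h3
  have hprod : (∏ c : C, (((((N ^ Nat.card {s : S // rel s c} - Nat.card (Quotient (omegaSetoid rel π c))).factorial : ℂ)) / (((N ^ Nat.card {s : S // rel s c}).factorial : ℂ))) * (N : ℂ) ^ (Nat.card {s : S // rel s c} * (Tpc D χ rel π c).ncomp) * (Tpc D χ rel π c).tdTraceInj (fun e => castCol rel e.2 (X e.1)))) = ∏ c : C, (((((N ^ Nat.card {s : S // rel s c} - Nat.card (Quotient (omegaSetoid rel π c))).factorial : ℂ)) * (∑ k : Quotient (omegaSetoid rel π c) → ColIx rel c N, if Function.Injective k then ∏ e : {e : E // χ e = c}, (castCol rel e.2 (X e.1)) (k ((Tpc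 D χ rel π c).tgt e)) (k ((Tpc D χ rel π c).src e)) else 0)) / (((N ^ Nat.card {s : S // rel s c}).factorial : ℂ))) :=
    Finset.prod_congr rfl fun c _ => hfac c
  have hR : (N : ℂ) ^ (∑ᶠ s : S, (Nat.card (Quotient (π s)) - 1)) * lambdaN N Λ π *
        ∏ᶠ c : C, (((((N ^ Nat.card {s : S // rel s c} - Nat.card (Quotient (omegaSetoid rel π c))).factorial : ℂ)) / (((N ^ Nat.card {s : S // rel s c}).factorial : ℂ))) * (N : ℂ) ^ (Nat.card {s : S // rel s c} * (Tpc D χ rel π c).ncomp) * (Tpc D χ rel π c).tdTraceInj (fun e => castCol rel e.2 (X e.1))) = (((1 / (N : ℂ) ^ (Nat.card S)) * ((∑ i : V → BigIx S N, if (∀ s : S, Setoid.ker (fun v => i v s) = π s) then (∏ᶠ v : V, Λ v (i v) (i v)) else 0) * (∏ c : C, ((((N ^ Nat.card {s : S // rel s c} - Nat.card (Quotient (omegaSetoid rel π c))).factorial : ℂ)) * (∑ k : Quotient (omegaSetoid rel π c) → ColIx rel c N, if Function.Injective k then ∏ e : {e : E // χ e = c}, (castCol rel e.2 (X e.1)) (k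 ((Tpc D χ rel π c).tgt e)) (k ((Tpc D χ rel π c).src e)) else 0))))) / (∏ c : C, (((N ^ Nat.card {s : S // rel s c}).factorial : ℂ)))) := by
    rw [finprod_eq_prod_of_fintype]
    simp only [lambdaN, finsum_eq_sum_of_fintype]
    rw [hprod, Finset.prod_div_distrib, hscal]
    ring
  exact hL.trans hR.symm

end GraphPaper
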